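/- Every nonconstant periodic solution t ↦ (x(t), y(t)) of the unperturbed system ẋ = y, ẏ = x − x³ whose energy h = H(x(0), y(0)) satisfies −1/4 < h < 0 has minimal period T > √2·π; equivalently, the frequency ω = 2π/T of self-excited oscillations in the domains G₁± inside the figure-eight satisfies 0 < ω < √2. Consequently, only resonance levels ω = p₄/p with p > p₄/√2 can occur in G₁±. -/

import Mathlib

/-- The Hamiltonian of the unperturbed Duffing equation: H(x,y) = y²/2 − x²/2 + x⁴/4. -/
noncomputable def H (x y : ℝ) : ℝ := y ^ 2 / 2 - x ^ 2 / 2 + x ^ 4 / 4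

open intervalIntegral MeasureTheory

private lemma signConst {x : ℝ → ℝ} (cx : Continuous x) (hne : ∀ t, x t ≠ 0)
    (h0 : 0 < x 0) : ∀ t, 0 < x t := by
  intro t
  by_contra hle
  push_neg at hle
  have hlt : x t < 0 := lt_of_le_of_ne hle (hne t)
  have h0m : (0:ℝ) ∈ Set.uIcc (x 0) (x t) := by
    rw [Set.mem_uIcc]; right; constructor <;> linarith
  obtain ⟨c, _, hc⟩ := intermediate_value_uIcc (cx.continuousOn (s := Set.uIcc 0 t)) h0m
  exact hne c hc

set_option maxHeartbeats 1000000 in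
private lemma keyPos (x y : ℝ → ℝ)
    (hx : ∀ t, HasDerivAt x (y t) t)
    (hy : ∀ t, HasDerivAt y (x t - (x t) ^ 3) t)
    (T : ℝ) (hT : 0 < T)
    (hxT : x T = x 0) (hyT : y T = y 0)
    (hE : ∀ t, H (x t) (y t) = H (x 0) (y 0))
    (hh₁ : -1/4 < H (x 0) (y 0))
    (hpos : ∀ t, 0 < x t) :
    Real.sqrt 2 * Real.pi < T := by
  have dx : Differentiable ℝ x := fun t => (hx t).differentiableAt
  have dy : Differentiable ℝ y := fun t => (hy t).differentiableAt
  have cx : Continuous x := dx.continuous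
  have cy : Continuous y := dy.continuous
  have s2 : Real.sqrt 2 ^ 2 = 2 := Real.sq_sqrt (by norm_num)
  have s2pos : 0 < Real.sqrt 2 := Real.sqrt_pos.mpr (by norm_num)
  set h := H (x 0) (y 0) with hhdef
  -- the circle
  set u : ℝ → ℝ := fun t => 2 * (1 - x t ^ 2) with hu
  set v : ℝ → ℝ := fun t => 2 * Real.sqrt 2 * y t with hv
  have hR2 : ∀ t, u t ^ 2 + v t ^ 2 = 4 * (1 + 4 * h) := by
    intro t
    have ht := hE t
    simp only [H] at ht
    simp only [hu, hv]
    linear_combination 16 * ht + (4 * (y t) ^ 2) * s2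
  have hR2pos : 0 < 4 * (1 + 4 * h) := by linarith
  set R : ℝ := Real.sqrt (4 * (1 + 4 * h)) with hR
  have hRpos : 0 < R := Real.sqrt_pos.mpr hR2pos
  have hRsq : R ^ 2 = 4 * (1 + 4 * h) := Real.sq_sqrt hR2pos.le
  -- initial angle
  set z : ℂ := ⟨u 0, v 0⟩ with hz
  have hzabs : ‖z‖ = R := by
    rw [Complex.norm_def, hz, Complex.normSq_mk, hR]
    congr 1
    have := hR2 0
    ring_nf
    ring_nf at this
    linarith
  have hz0 : z ≠ 0 := by
    intro h0
    rw [h0] at hzabs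
    simp at hzabs
    exact hRpos.ne' hzabs.symm
  -- the angle function
  set θ : ℝ → ℝ := fun r => z.arg + Real.sqrt 2 * ∫ s in (0:ℝ)..r, x s with hθdef
  have hθd : ∀ t, HasDerivAt θ (Real.sqrt 2 * x t) t := by
    intro t
    have hF : HasDerivAt (fun r => ∫ s in (0:ℝ)..r, x s) (x t) t :=
      (cx.integral_hasStrictDerivAt 0 t).hasDerivAt
    exact (hF.const_mul (Real.sqrt 2)).const_add z.arg
  have hθ0 : θ 0 = z.arg := by simp [hθdef]
  have hθT : θ T = z.arg + Real.sqrt 2 * ∫ s in (0:ℝ)..T, x s := rfl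
  -- u = R cos θ, v = R sin θ
  have hu0 : u 0 = R * Real.cos (θ 0) := by
    rw [hθ0, Complex.cos_arg hz0, hzabs]
    field_simp
    rfl
  have hv0 : v 0 = R * Real.sin (θ 0) := by
    rw [hθ0, Complex.sin_arg, hzabs]
    field_simp
    rfl
  set e : ℝ → ℝ := fun t =>
      (u t - R * Real.cos (θ t)) ^ 2 + (v t - R * Real.sin (θ t)) ^ 2 with he
  have hed : ∀ t, HasDerivAt e 0 t := by
    intro t
    have hud : HasDerivAt u (2 * (-(2 * x t ^ 1 * y t))) t :=
      (((hx t).pow 2).const_sub 1).const_mul 2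
    have hvd : HasDerivAt v (2 * Real.sqrt 2 * (x t - x t ^ 3)) t :=
      (hy t).const_mul (2 * Real.sqrt 2)
    have hcd : HasDerivAt (fun r => R * Real.cos (θ r))
        (R * (-Real.sin (θ t) * (Real.sqrt 2 * x t))) t :=
      ((Real.hasDerivAt_cos (θ t)).comp t (hθd t)).const_mul R
    have hsd : HasDerivAt (fun r => R * Real.sin (θ r))
        (R * (Real.cos (θ t) * (Real.sqrt 2 * x t))) t :=
      ((Real.hasDerivAt_sin (θ t)).comp t (hθd t)).const_mul R
    have hbig := (((hud.sub hcd).pow 2).add ((hvd.sub hsd).pow 2))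
    convert (show HasDerivAt e _ t from hbig) using 1
    simp only [hu, hv, Pi.sub_apply]
    linear_combination
      (-(4 * x t * y t * (2 - 2 * (x t) ^ 2 - R * Real.cos (θ t)))) * s2
  have econst : ∀ t, e t = 0 := by
    have hc : ∀ t, e t = e 0 :=
      fun t => is_const_of_deriv_eq_zero
        (fun s => (hed s).differentiableAt) (fun s => (hed s).deriv) t 0
    have he0 : e 0 = 0 := by
      simp only [he, hu0, hv0]
      ring
    intro t; rw [hc t, he0]
  have huv : ∀ t, u t = R * Real.cos (θ t) ∧ v t = R * Real.sin (θ t) := by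
    intro t
    have h0 := econst t
    simp only [he] at h0
    constructor <;>
      nlinarith [sq_nonneg (u t - R * Real.cos (θ t)), sq_nonneg (v t - R * Real.sin (θ t))]
  -- periodicity of (u, v) forces θ T - θ 0 ∈ 2πℤ
  have hcosT : Real.cos (θ T) = Real.cos (θ 0) := by
    have h1 := (huv T).1
    have h2 := (huv 0).1
    have huT : u T = u 0 := by simp only [hu, hxT]
    rw [huT, h2] at h1
    exact (mul_left_cancel₀ hRpos.ne' h1.symm)
  have hsinT : Real.sin (θ T) = Real.sin (θ 0) := by
    have h1 := (huv T).2
    have h2 := (huv 0).2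
    have hvT : v T = v 0 := by simp only [hv, hyT]
    rw [hvT, h2] at h1
    exact (mul_left_cancel₀ hRpos.ne' h1.symm)
  have hexp : Complex.exp ((θ T : ℂ) * Complex.I) = Complex.exp ((θ 0 : ℂ) * Complex.I) := by
    rw [Complex.exp_mul_I, Complex.exp_mul_I, ← Complex.ofReal_cos, ← Complex.ofReal_cos,
      ← Complex.ofReal_sin, ← Complex.ofReal_sin, hcosT, hsinT]
  obtain ⟨n, hn⟩ := Complex.exp_eq_exp_iff_exists_int.mp hexp
  have him : θ T = θ 0 + n * (2 * Real.pi) := by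
    have := congrArg Complex.im hn
    simpa using this
  -- θ T - θ 0 = √2 ∫ x > 0, hence n ≥ 1
  have hIpos : 0 < ∫ s in (0:ℝ)..T, x s :=
    intervalIntegral_pos_of_pos_on (cx.intervalIntegrable 0 T)
      (fun s _ => hpos s) hT
  have hdiff : Real.sqrt 2 * ∫ s in (0:ℝ)..T, x s = n * (2 * Real.pi) := by
    have : θ T - θ 0 = Real.sqrt 2 * ∫ s in (0:ℝ)..T, x s := by
      rw [hθT, hθ0]; ring
    linarith [him, this]
  have hn1 : (1:ℝ) ≤ (n:ℝ) := by
    have hpipos := Real.pi_pos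
    have hpos2 : (0:ℝ) < n * (2 * Real.pi) := by
      rw [← hdiff]; exact mul_pos s2pos hIpos
    have : (0:ℝ) < (n:ℝ) := by nlinarith
    have : (0:ℤ) < n := by exact_mod_cast this
    exact_mod_cast this
  have hIge : Real.sqrt 2 * Real.pi ≤ ∫ s in (0:ℝ)..T, x s := by
    have hpipos := Real.pi_pos
    have h2pi : 2 * Real.pi ≤ Real.sqrt 2 * ∫ s in (0:ℝ)..T, x s := by
      rw [hdiff]; nlinarith
    nlinarith
  -- FTC for y over the period
  have hIy : (∫ s in (0:ℝ)..T, (x s - x s ^ 3)) = 0 := by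
    rw [integral_eq_sub_of_hasDerivAt (fun s _ => hy s)
      ((cx.sub (cx.pow 3)).intervalIntegrable 0 T), hyT, sub_self]
  -- the pointwise inequality and strictness
  set g : ℝ → ℝ := fun s => 1 - x s - (x s - x s ^ 3) / 2 with hg
  have cg : Continuous g := by
    simp only [hg]
    exact (continuous_const.sub cx).sub ((cx.sub (cx.pow 3)).div_const 2)
  have hgnn : ∀ s, 0 ≤ g s := by
    intro s
    simp only [hg]
    nlinarith [sq_nonneg (x s - 1), hpos s]
  have hIg : (∫ s in (0:ℝ)..T, g s) = T - ∫ s in (0:ℝ)..T, x s := by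
    have h1 : IntervalIntegrable (fun s => 1 - x s) volume 0 T :=
      (continuous_const.sub cx).intervalIntegrable 0 T
    have h2 : IntervalIntegrable (fun s => (x s - x s ^ 3) / 2) volume 0 T :=
      ((cx.sub (cx.pow 3)).div_const 2).intervalIntegrable 0 T
    have h3 : IntervalIntegrable x volume 0 T := cx.intervalIntegrable 0 T
    calc (∫ s in (0:ℝ)..T, g s)
        = (∫ s in (0:ℝ)..T, (1 - x s)) - ∫ s in (0:ℝ)..T, (x s - x s ^ 3) / 2 := by
          rw [← integral_sub h1 h2]
      _ = (∫ s in (0:ℝ)..T, (1 - x s)) - (∫ s in (0:ℝ)..T, (x s - x s ^ 3)) / 2 := by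
          rw [intervalIntegral.integral_div]
      _ = (∫ s in (0:ℝ)..T, (1:ℝ)) - (∫ s in (0:ℝ)..T, x s) - 0 / 2 := by
          rw [integral_sub (continuous_const.intervalIntegrable 0 T) h3, hIy]
      _ = T - ∫ s in (0:ℝ)..T, x s := by simp
  -- there is a point where x ≠ 1
  have hne1 : ∃ t₀ ∈ Set.Ioo 0 T, x t₀ ≠ 1 := by
    by_contra hcon
    push_neg at hcon
    have hmem : T / 2 ∈ Set.Ioo (0:ℝ) T := ⟨by linarith, by linarith⟩
    have hev : x =ᶠ[nhds (T/2)] fun _ => (1:ℝ) :=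
      Filter.eventuallyEq_of_mem (isOpen_Ioo.mem_nhds hmem) (fun s hs => hcon s hs)
    have hd0 : HasDerivAt x 0 (T/2) :=
      (hasDerivAt_const (T/2) (1:ℝ)).congr_of_eventuallyEq hev
    have hy0 : y (T/2) = 0 := by
      have := (hx (T/2)).unique hd0
      exact this
    have hx1 : x (T/2) = 1 := hcon _ hmem
    have := hE (T/2)
    rw [hx1, hy0] at this
    simp only [H] at this
    norm_num at this
    linarith
  obtain ⟨t₀, ht₀mem, ht₀⟩ := hne1
  have hgt₀ : 0 < g t₀ := by
    have hsq : 0 < (x t₀ - 1) ^ 2 :=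
      lt_of_le_of_ne (sq_nonneg _) (Ne.symm (pow_ne_zero 2 (sub_ne_zero.mpr ht₀)))
    simp only [hg]
    nlinarith [hpos t₀, mul_pos hsq (by linarith [hpos t₀] : (0:ℝ) < x t₀ + 2)]
  -- strict positivity of ∫ g
  have hIgpos : 0 < ∫ s in (0:ℝ)..T, g s := by
    have hopen : IsOpen {s : ℝ | 0 < g s} := isOpen_lt continuous_const cg
    obtain ⟨ε, hε, hball⟩ := Metric.isOpen_iff.mp hopen t₀ hgt₀
    set l : ℝ := max 0 (t₀ - ε / 2) with hl
    set r : ℝ := min T (t₀ + ε / 2) with hr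
    have hlt₀ : l < t₀ := max_lt ht₀mem.1 (by linarith)
    have ht₀r : t₀ < r := lt_min ht₀mem.2 (by linarith)
    have hl0 : 0 ≤ l := le_max_left _ _
    have hrT : r ≤ T := min_le_left _ _
    have hglr : ∀ s ∈ Set.Ioo l r, 0 < g s := by
      intro s hs
      apply hball
      rw [Metric.mem_ball, Real.dist_eq, abs_sub_lt_iff]
      have h1 : t₀ - ε / 2 ≤ l := le_max_right _ _
      have h2 : r ≤ t₀ + ε / 2 := min_le_right _ _
      constructor <;> [linarith [hs.2]; linarith [hs.1]]
    have i1 : IntervalIntegrable g volume 0 l := cg.intervalIntegrable _ _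
    have i2 : IntervalIntegrable g volume l r := cg.intervalIntegrable _ _
    have i3 : IntervalIntegrable g volume r T := cg.intervalIntegrable _ _
    have q1 : (∫ s in (0:ℝ)..l, g s) + (∫ s in l..r, g s) = ∫ s in (0:ℝ)..r, g s :=
      integral_add_adjacent_intervals i1 i2
    have q2 : (∫ s in (0:ℝ)..r, g s) + (∫ s in r..T, g s) = ∫ s in (0:ℝ)..T, g s :=
      integral_add_adjacent_intervals (i1.trans i2) i3
    have p1 : 0 ≤ ∫ s in (0:ℝ)..l, g s :=
      integral_nonneg hl0 (fun s _ => hgnn s)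
    have p2 : 0 < ∫ s in l..r, g s :=
      intervalIntegral_pos_of_pos_on i2 hglr (hlt₀.trans ht₀r)
    have p3 : 0 ≤ ∫ s in r..T, g s :=
      integral_nonneg hrT (fun s _ => hgnn s)
    linarith
  -- conclude
  have : T - (∫ s in (0:ℝ)..T, x s) > 0 := by rw [← hIg]; exact hIgpos
  linarith

theorem period_inside_loops (x y : ℝ → ℝ)
    (hx : ∀ t, HasDerivAt x (y t) t)
    (hy : ∀ t, HasDerivAt y (x t - (x t) ^ 3) t)
    (T : ℝ) (hT : 0 < T)
    (hper : ∀ t, x (t + T) = x t ∧ y (t + T) = y t)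
    (hmin : ∀ T', 0 < T' → (∀ t, x (t + T') = x t ∧ y (t + T') = y t) → T ≤ T')
    (hnc : ∃ t₁ t₂, (x t₁, y t₁) ≠ (x t₂, y t₂))
    (hh₁ : -1/4 < H (x 0) (y 0)) (hh₂ : H (x 0) (y 0) < 0) :
    Real.sqrt 2 * Real.pi < T ∧
    (0 < 2 * Real.pi / T ∧ 2 * Real.pi / T < Real.sqrt 2) ∧
    (∀ p₄ : ℝ, 0 < p₄ → ∀ p : ℕ, 0 < p →
      2 * Real.pi / T = p₄ / p → p₄ / Real.sqrt 2 < (p : ℝ)) := by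
  have dx : Differentiable ℝ x := fun t => (hx t).differentiableAt
  have cx : Continuous x := dx.continuous
  have s2 : Real.sqrt 2 ^ 2 = 2 := Real.sq_sqrt (by norm_num)
  have s2pos : 0 < Real.sqrt 2 := Real.sqrt_pos.mpr (by norm_num)
  have hpipos := Real.pi_pos
  -- energy conservation
  have hE : ∀ t, H (x t) (y t) = H (x 0) (y 0) := by
    have hd : ∀ t, HasDerivAt (fun t => H (x t) (y t)) 0 t := by
      intro t
      have h1 := ((((hy t).pow 2).div_const 2).sub (((hx t).pow 2).div_const 2)).add
        (((hx t).pow 4).div_const 4)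
      have : (fun t => H (x t) (y t)) =
          fun t => (y t) ^ 2 / 2 - (x t) ^ 2 / 2 + (x t) ^ 4 / 4 := by
        funext t; simp [H]
      rw [this]
      convert (show HasDerivAt (fun t => y t ^ 2 / 2 - x t ^ 2 / 2 + x t ^ 4 / 4) _ t from h1) using 1
      push_cast
      ring
    exact fun t => is_const_of_deriv_eq_zero
      (fun s => (hd s).differentiableAt) (fun s => (hd s).deriv) t 0
  -- x never vanishes
  have hne : ∀ t, x t ≠ 0 := by
    intro t h0
    have hlt : H (x t) (y t) < 0 := by rw [hE t]; exact hh₂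
    rw [h0] at hlt
    simp only [H] at hlt
    nlinarith [sq_nonneg (y t)]
  have hxT : x T = x 0 := by have := (hper 0).1; rwa [zero_add] at this
  have hyT : y T = y 0 := by have := (hper 0).2; rwa [zero_add] at this
  -- main inequality, by symmetry
  have hmain : Real.sqrt 2 * Real.pi < T := by
    rcases (hne 0).lt_or_gt with hneg | hposi
    · -- x 0 < 0 : apply keyPos to (-x, -y)
      have e1 : ∀ a b : ℝ, H (-a) (-b) = H a b := by
        intro a b; simp only [H]; ring
      have hX : ∀ t, HasDerivAt (fun t => -x t) (-y t) t := fun t => (hx t).neg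
      have hY : ∀ t, HasDerivAt (fun t => -y t) ((-x t) - (-x t) ^ 3) t := by
        intro t
        convert (show HasDerivAt (fun t => -y t) _ t from (hy t).neg) using 1
        ring
      have hpos' : ∀ t, 0 < -x t := by
        have := signConst (x := fun t => -x t) cx.neg
          (fun t h0 => hne t (by linarith [neg_eq_zero.mp h0])) (by simpa using hneg)
        simpa using this
      have hE' : ∀ t, H (-x t) (-y t) = H (-x 0) (-y 0) := by
        intro t; rw [e1, e1]; exact hE t
      have hh₁' : -1/4 < H (-x 0) (-y 0) := by rw [e1]; exact hh₁
      exact keyPos (fun t => -x t) (fun t => -y t) hX hY T hT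
        (by simp [hxT]) (by simp [hyT]) hE' hh₁' hpos'
    · -- x 0 > 0
      exact keyPos x y hx hy T hT hxT hyT hE hh₁ (signConst cx hne hposi)
  refine ⟨hmain, ⟨by positivity, ?_⟩, ?_⟩
  · rw [div_lt_iff₀ hT]
    nlinarith
  · intro p₄ hp₄ p hp hres
    have hpR : (0:ℝ) < (p:ℝ) := by exact_mod_cast hp
    have h1 : p₄ / (p:ℝ) < Real.sqrt 2 := by
      rw [← hres, div_lt_iff₀ hT]
      nlinarith
    rw [div_lt_iff₀ hpR] at h1
    rw [div_lt_iff₀ s2pos]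
    linarith [h1]
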